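/- For the star graph S_n, the number of distinct Pak-Stanley labels (equivalently, distinct outcomes of the S_n-Three Rows Game) equals (n+2)·2^{n-1}. Equivalently: sum over all subsets S ⊆ {1,...,n} of (n+1-|S|) equals (n+2)·2^{n-1}. -/

import Mathlib

open scoped Classical

/-- The outcome of a history of the `S_n`-Three Rows Game: column `j : Fin n` has top
square (`h j = 0`) labelled `0`, blank middle square (`h j = 1`), and bottom square
(`h j = 2`) labelled `j + 1`.  The outcome is recorded as a counting function on ℕ. -/
def soutcome (n : ℕ) (h : Fin n → Fin 3) : ℕ → ℕ := fun i =>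
  if i = 0 then (Finset.univ.filter (fun j : Fin n => h j = 0)).card
  else (Finset.univ.filter (fun j : Fin n => h j = 2 ∧ (j : ℕ) + 1 = i)).card

/-- Sum of `2·|S|` over all subsets of `s`. -/
lemma sum_card_powerset {α : Type*} [DecidableEq α] (s : Finset α) :
    ∑ S ∈ s.powerset, 2 * S.card = s.card * 2 ^ s.card := by
  induction s using Finset.induction with
  | empty => simp
  | insert a s ha ih =>
    rw [Finset.sum_powerset_insert ha, ih]
    have h1 : ∀ S ∈ s.powerset, 2 * (insert a S).card = 2 * S.card + 2 := by
      intro S hS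
      rw [Finset.card_insert_of_notMem (fun h => ha (Finset.mem_powerset.mp hS h))]
      ring
    rw [Finset.sum_congr rfl h1, Finset.sum_add_distrib, ih, Finset.sum_const,
      Finset.card_powerset, Finset.card_insert_of_notMem ha]
    ring

lemma sum_part (n : ℕ) :
    ∑ S ∈ (Finset.univ : Finset (Fin n)).powerset, (n + 1 - S.card) * 2
      = (n + 2) * 2 ^ n := by
  have key : ∀ S ∈ (Finset.univ : Finset (Fin n)).powerset,
      (n + 1 - S.card) * 2 = 2 * Sᶜ.card + 2 := by
    intro S _
    have hc : Sᶜ.card = n - S.card := by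
      rw [Finset.card_compl, Fintype.card_fin]
    have hle : S.card ≤ n := by
      simpa using Finset.card_le_card (Finset.subset_univ S)
    omega
  rw [Finset.sum_congr rfl key, Finset.sum_add_distrib, Finset.sum_const,
    Finset.card_powerset, Finset.card_univ, Fintype.card_fin]
  have compl_sum : ∑ S ∈ (Finset.univ : Finset (Fin n)).powerset, 2 * Sᶜ.card
      = ∑ S ∈ (Finset.univ : Finset (Fin n)).powerset, 2 * S.card := by
    apply Finset.sum_nbij' (fun S => Sᶜ) (fun S => Sᶜ) <;> simp
  rw [compl_sum, sum_card_powerset, Finset.card_univ, Fintype.card_fin]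
  ring

/-- Canonical form of an outcome from support `S` and top-count `k`. -/
def gout (n : ℕ) (S : Finset (Fin n)) (k : ℕ) : ℕ → ℕ := fun i =>
  if i = 0 then k else (S.filter (fun j : Fin n => (j : ℕ) + 1 = i)).card

/-- The domain: pairs `(S, k)` with `k ≤ n - |S|`. -/
def sdom (n : ℕ) : Finset ((_ : Finset (Fin n)) × ℕ) :=
  Finset.univ.sigma (fun S => Finset.range (n + 1 - S.card))

lemma range_eq (n : ℕ) :
    Set.range (soutcome n) = ↑((sdom n).image (fun x => gout n x.1 x.2)) := by
  ext f
  simp only [Set.mem_range, Finset.coe_image, Set.mem_image, Finset.mem_coe,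
    sdom, Finset.mem_sigma, Finset.mem_univ, true_and, Finset.mem_range]
  constructor
  · rintro ⟨h, rfl⟩
    refine ⟨⟨Finset.univ.filter (fun j => h j = 2),
      (Finset.univ.filter (fun j => h j = 0)).card⟩, ?_, ?_⟩
    · dsimp only
      have hd : Disjoint (Finset.univ.filter (fun j : Fin n => h j = 0))
          (Finset.univ.filter (fun j : Fin n => h j = 2)) := by
        rw [Finset.disjoint_filter]
        intro j _ h0 h2
        rw [h0] at h2
        exact absurd h2 (by decide)
      have := Finset.card_union_of_disjoint hd ▸ Finset.card_le_card
        ((Finset.univ.filter (fun j : Fin n => h j = 0) ∪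
          Finset.univ.filter (fun j : Fin n => h j = 2)).subset_univ)
      simp only [Finset.card_univ, Fintype.card_fin] at this
      omega
    · funext i
      simp only [soutcome, gout]
      split
      · rfl
      · rw [← Finset.filter_filter]
  · rintro ⟨⟨S, k⟩, hk, rfl⟩
    dsimp only at hk ⊢
    have hSc : S.card ≤ n := by simpa using Finset.card_le_card S.subset_univ
    have hcompl : k ≤ Sᶜ.card := by
      rw [Finset.card_compl, Fintype.card_fin]; omega
    obtain ⟨T, hTS, hTcard⟩ := Finset.exists_subset_card_eq hcompl
    refine ⟨fun j => if j ∈ S then 2 else if j ∈ T then 0 else 1, ?_⟩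
    funext i
    simp only [soutcome, gout]
    have hfilter0 : Finset.univ.filter
        (fun j : Fin n => (if j ∈ S then (2:Fin 3) else if j ∈ T then 0 else 1) = 0) = T := by
      ext j
      simp only [Finset.mem_filter, Finset.mem_univ, true_and]
      by_cases hjS : j ∈ S
      · simp [hjS]
        intro hjT
        exact absurd hjS (by simpa using hTS hjT)
      · by_cases hjT : j ∈ T <;> simp [hjS, hjT]
    have hfilter2 : ∀ i, Finset.univ.filter
        (fun j : Fin n => (if j ∈ S then (2:Fin 3) else if j ∈ T then 0 else 1) = 2
          ∧ (j : ℕ) + 1 = i) = S.filter (fun j : Fin n => (j : ℕ) + 1 = i) := by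
      intro i
      ext j
      simp only [Finset.mem_filter, Finset.mem_univ, true_and]
      by_cases hjS : j ∈ S
      · simp [hjS]
      · by_cases hjT : j ∈ T <;> simp [hjS, hjT]
    split
    · rw [hfilter0, hTcard]
    · rw [hfilter2]

lemma gout_injOn (n : ℕ) :
    Set.InjOn (fun x : (_ : Finset (Fin n)) × ℕ => gout n x.1 x.2) (sdom n) := by
  rintro ⟨S, k⟩ - ⟨S', k'⟩ - heq
  have h0 : k = k' := by
    have := congrFun heq 0
    simpa [gout] using this
  have hS : S = S' := by
    ext j
    have := congrFun heq ((j : ℕ) + 1)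
    simp only [gout, Nat.succ_ne_zero, if_false] at this
    have hfl : ∀ (U : Finset (Fin n)),
        U.filter (fun j' : Fin n => (j' : ℕ) + 1 = (j : ℕ) + 1)
          = if j ∈ U then {j} else ∅ := by
      intro U
      ext j'
      have : ((j' : ℕ) + 1 = (j : ℕ) + 1) ↔ j' = j := by
        constructor
        · intro h; exact Fin.ext (Nat.succ_injective h)
        · rintro rfl; rfl
      by_cases hj : j ∈ U <;> simp [Finset.mem_filter, this, hj] <;>
        aesop
    rw [hfl S, hfl S'] at this
    by_cases h1 : j ∈ S <;> by_cases h2 : j ∈ S' <;> simp_all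
  simp [h0, hS]

/-- The number of distinct Pak-Stanley labels for the star graph `S_n` (distinct outcomes
of the `S_n`-Three Rows Game) is `(n+2)·2^(n-1)`; equivalently
`∑_{S ⊆ [n]} (n + 1 - |S|) = (n+2)·2^(n-1)`. -/
theorem star_label_count (n : ℕ) (hn : 1 ≤ n) :
    Nat.card (Set.range (soutcome n)) = (n + 2) * 2 ^ (n - 1) ∧
    ∑ S ∈ (Finset.univ : Finset (Fin n)).powerset, (n + 1 - S.card)
      = (n + 2) * 2 ^ (n - 1) := by
  have hpow : 2 ^ n = 2 ^ (n - 1) * 2 := by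
    rw [← pow_succ]
    congr 1
    omega
  have hsum : ∑ S ∈ (Finset.univ : Finset (Fin n)).powerset, (n + 1 - S.card)
      = (n + 2) * 2 ^ (n - 1) := by
    have h2 := sum_part n
    rw [← Finset.sum_mul, hpow, ← mul_assoc] at h2
    exact Nat.eq_of_mul_eq_mul_right two_pos h2
  refine ⟨?_, hsum⟩
  rw [range_eq n, Nat.card_coe_set_eq, Set.ncard_coe_finset,
    Finset.card_image_of_injOn (by simpa [sdom] using gout_injOn n)]
  rw [sdom, Finset.card_sigma]
  simp only [Finset.card_range]
  have : ∀ S : Finset (Fin n), n + 1 - S.card = n + 1 - S.card := fun _ => rfl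
  calc ∑ S : Finset (Fin n), (n + 1 - S.card)
      = ∑ S ∈ (Finset.univ : Finset (Fin n)).powerset, (n + 1 - S.card) := by
        rw [Finset.powerset_univ]
    _ = (n + 2) * 2 ^ (n - 1) := hsum
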